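/- Let N ≥ 3 be an integer and let 0 ≤ j ≤ n be integers. Define Q(u_1,u_2) = (1-u_1)^j · P_{n-j}^{(N-2+2j,0)}(2u_1 - 1) · P_j^{(N-3,0)}(2u_2/(1-u_1) − 1) for (u_1,u_2) in the open simplex Σ_2 = {u_1 > 0, u_2 > 0, u_1+u_2 < 1}. Then ∫_{Σ_2} Q(u_1,u_2)² (1-u_1-u_2)^{N-3} du_1 du_2 = 1/((2n+N-1)(2j+N-2)). -/

import Mathlib

open MeasureTheory Polynomial Finset

/-- Jacobi polynomial with nonnegative integer parameters. -/
noncomputable def jacobiP (α β n : ℕ) (x : ℝ) : ℝ :=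
  ∑ m ∈ Finset.range (n + 1),
    (Nat.choose (n + α) (n - m) : ℝ) * (Nat.choose (n + β) m : ℝ) *
      ((x - 1) / 2) ^ m * ((x + 1) / 2) ^ (n - m)


lemma fd_zero : ∀ (m : ℕ) (p : Polynomial ℝ), p.degree < (m:ℕ) →
    ∀ x : ℝ, (fwdDiff 1)^[m] (fun y : ℝ => p.eval y) x = 0 := by
  intro m
  induction m with
  | zero =>
    intro p hp x
    have : p = 0 := by
      rw [Polynomial.degree_eq_bot.symm] at *
      exact Nat.WithBot.lt_zero_iff.mp (by exact_mod_cast hp)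
    simp [this]
  | succ m ih =>
    intro p hp x
    rw [Function.iterate_succ_apply]
    have hΔ : fwdDiff 1 (fun y : ℝ => p.eval y) = fun y : ℝ => (p.comp (X + 1) - p).eval y := by
      funext y
      simp [fwdDiff, eval_comp]
    rw [hΔ]
    apply ih
    by_cases h0 : p.comp (X + 1) - p = 0
    · rw [h0]
      rw [Polynomial.degree_zero]
      exact_mod_cast WithBot.bot_lt_coe m
    · have hp0 : p ≠ 0 := by
        rintro rfl
        simp at h0
    
      have hC : (X + 1 : Polynomial ℝ) = X + C 1 := by rw [C_1]
      have hX : (X + 1 : Polynomial ℝ).natDegree = 1 := by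
        rw [hC]; exact natDegree_X_add_C (1:ℝ)
      have hcl : (p.comp (X + 1)).leadingCoeff = p.leadingCoeff := by
        rw [leadingCoeff_comp (by rw [hX]; norm_num)]
        rw [hC, (monic_X_add_C (1:ℝ)).leadingCoeff, one_pow, mul_one]
      have hcomp0 : p.comp (X + 1) ≠ 0 := by
        intro h
        apply hp0
        rw [← leadingCoeff_eq_zero, ← hcl, h, leadingCoeff_zero]
      have hdeg : (p.comp (X + 1)).degree = p.degree := by
        rw [degree_eq_natDegree hcomp0, degree_eq_natDegree hp0]
        rw [natDegree_comp, hX, mul_one]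
      have hlt := degree_sub_lt hdeg hcomp0 hcl
      rw [hdeg] at hlt
      calc (p.comp (X+1) - p).degree < p.degree := hlt
        _ ≤ (m : ℕ) := by
          rw [← natDegree_lt_iff_degree_lt hp0] at hp
          exact (degree_le_natDegree).trans (by exact_mod_cast Nat.lt_succ_iff.mp hp)

lemma prod_sub_range (m : ℕ) : ∏ i ∈ Finset.range m, ((m:ℝ) - i) = m.factorial := by
  have h : ∀ m : ℕ, ∏ i ∈ Finset.range m, (m - i) = m.factorial := by
    intro m
    induction m with
    | zero => simp
    | succ m ih =>
      rw [Finset.prod_range_succ', Nat.factorial_succ, ← ih]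
      simp [mul_comm]
  rw [← h m]
  push_cast [Finset.prod_natCast]
  refine Finset.prod_congr rfl fun i hi => ?_
  rw [Nat.cast_sub (le_of_lt (Finset.mem_range.mp hi))]

lemma sum_choose_eval (m : ℕ) (p : Polynomial ℝ) (hp : p.natDegree ≤ m) :
    ∑ k ∈ Finset.range (m+1), (-1:ℝ)^k * (m.choose k) * p.eval (k:ℝ)
      = (-1:ℝ)^m * m.factorial * p.coeff m := by
  set Φ : Polynomial ℝ := ∏ i ∈ Finset.range m, (X - C (i:ℝ)) with hΦ
  have hΦm : Φ.Monic := monic_prod_of_monic _ _ fun i _ => monic_X_sub_C _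
  have hΦd : Φ.natDegree = m := by
    rw [hΦ, natDegree_prod _ _ fun i _ => X_sub_C_ne_zero _]
    simp only [natDegree_X_sub_C]
    simp
  set q : Polynomial ℝ := p - C (p.coeff m) * Φ with hq
  have hqd : q.degree < (m : ℕ) := by
    rw [degree_lt_iff_coeff_zero]
    intro i hi
    have hi' : m ≤ i := by exact_mod_cast hi
    rcases eq_or_lt_of_le hi' with h | h
    · rw [hq]
      simp only [coeff_sub, coeff_C_mul]
      rw [← h, ← hΦd, hΦm.coeff_natDegree]
      ring
    · rw [hq]
      simp only [coeff_sub, coeff_C_mul]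
      have hpc : p.coeff i = 0 := coeff_eq_zero_of_natDegree_lt (lt_of_le_of_lt hp h)
      have hΦc : Φ.coeff i = 0 := coeff_eq_zero_of_natDegree_lt (by rw [hΦd]; exact h)
      rw [hpc, hΦc]
      ring
  -- the alternating sum of q vanishes
  have hqsum : ∑ k ∈ Finset.range (m+1), (-1:ℝ)^k * (m.choose k) * q.eval (k:ℝ) = 0 := by
    have h0 := fd_zero m q hqd 0
    rw [fwdDiff_iter_eq_sum_shift] at h0
    have : ∑ k ∈ Finset.range (m+1), (-1:ℝ)^k * (m.choose k) * q.eval (k:ℝ)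
        = (-1:ℝ)^m * ∑ k ∈ Finset.range (m + 1),
            ((-1 : ℤ) ^ (m - k) * (m.choose k)) • q.eval ((0:ℝ) + k • (1:ℝ)) := by
      rw [Finset.mul_sum]
      refine Finset.sum_congr rfl fun k hk => ?_
      have hk' : k ≤ m := Nat.lt_succ_iff.mp (Finset.mem_range.mp hk)
      have hsgn : (-1:ℝ)^m * (-1:ℝ)^(m-k) = (-1:ℝ)^k := by
        rw [← pow_add]
        rw [show m + (m - k) = k + 2*(m-k) from by omega, pow_add, pow_mul]
        norm_num
      push_cast
      rw [← hsgn]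
      ring_nf
      simp [nsmul_eq_mul]
      ring
    rw [this, h0, mul_zero]
  -- the alternating sum of Φ
  have hΦsum : ∑ k ∈ Finset.range (m+1), (-1:ℝ)^k * (m.choose k) * Φ.eval (k:ℝ)
      = (-1:ℝ)^m * m.factorial := by
    rw [Finset.sum_range_succ]
    have hz : ∀ k ∈ Finset.range m, (-1:ℝ)^k * (m.choose k) * Φ.eval (k:ℝ) = 0 := by
      intro k hk
      have : Φ.eval (k:ℝ) = 0 := by
        rw [hΦ, eval_prod]
        exact Finset.prod_eq_zero hk (by simp)
      simp [this]
    rw [Finset.sum_eq_zero hz, zero_add, Nat.choose_self]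
    have : Φ.eval (m:ℝ) = m.factorial := by
      rw [hΦ, eval_prod]
      simpa using prod_sub_range m
    rw [this]
    ring
  have hsplit : ∀ k : ℕ, p.eval (k:ℝ) = q.eval (k:ℝ) + p.coeff m * Φ.eval (k:ℝ) := by
    intro k
    rw [hq]
    simp only [eval_sub, eval_mul, eval_C]
    ring
  calc ∑ k ∈ Finset.range (m+1), (-1:ℝ)^k * (m.choose k) * p.eval (k:ℝ)
      = ∑ k ∈ Finset.range (m+1), ((-1:ℝ)^k * (m.choose k) * q.eval (k:ℝ)
          + p.coeff m * ((-1:ℝ)^k * (m.choose k) * Φ.eval (k:ℝ))) := by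
        refine Finset.sum_congr rfl fun k _ => ?_
        rw [hsplit k]; ring
    _ = (-1:ℝ)^m * m.factorial * p.coeff m := by
        rw [Finset.sum_add_distrib, hqsum, ← Finset.mul_sum, hΦsum]
        ring


lemma betaNat : ∀ (b a : ℕ), ∫ x in (0:ℝ)..1, x^a * (1-x)^b
    = (a.factorial * b.factorial : ℝ) / ((a+b+1).factorial) := by
  intro b
  induction b with
  | zero =>
    intro a
    simp [integral_pow]
    rw [Nat.factorial_succ]
    push_cast
    field_simp
  | succ b ih =>
    intro a
    have hu : ∀ x ∈ Set.uIcc (0:ℝ) 1, HasDerivAt (fun y : ℝ => (1-y)^(b+1))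
        (-((b+1) * (1-x)^b)) x := by
      intro x _
      have h1 : HasDerivAt (fun y : ℝ => 1 - y) (-1) x := by
        simpa using (hasDerivAt_id x).const_sub 1
      have := h1.pow (b+1)
      refine this.congr_deriv ?_
      push_cast
      ring
    have hv : ∀ x ∈ Set.uIcc (0:ℝ) 1, HasDerivAt (fun y : ℝ => y^(a+1) / (a+1))
        (x^a) x := by
      intro x _
      have := (hasDerivAt_pow (a+1) x).div_const ((a:ℝ)+1)
      refine this.congr_deriv ?_
      push_cast
      field_simp
    have hiu : IntervalIntegrable (fun x : ℝ => -((b+1) * (1-x)^b)) MeasureTheory.volume 0 1 :=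
      Continuous.intervalIntegrable (by fun_prop) 0 1
    have hiv : IntervalIntegrable (fun x : ℝ => x^a) MeasureTheory.volume 0 1 :=
      Continuous.intervalIntegrable (by fun_prop) 0 1
    have key := intervalIntegral.integral_mul_deriv_eq_deriv_mul hu hv hiu hiv
    -- key : ∫ (1-x)^(b+1) * x^a = ... - ∫ -((b+1)(1-x)^b) * (x^(a+1)/(a+1))
    have h2 : ∫ x in (0:ℝ)..1, x^a * (1-x)^(b+1)
        = ((b:ℝ)+1)/((a:ℝ)+1) * ∫ x in (0:ℝ)..1, x^(a+1) * (1-x)^b := by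
      rw [show (∫ x in (0:ℝ)..1, x^a * (1-x)^(b+1))
          = ∫ x in (0:ℝ)..1, (1-x)^(b+1) * x^a from by
        congr 1; funext x; ring]
      rw [key]
      have hz : ∫ x in (0:ℝ)..1, -((b:ℝ)+1) * ((1-x)^b) * (x^(a+1)/((a:ℝ)+1))
          = -(((b:ℝ)+1)/((a:ℝ)+1) * ∫ x in (0:ℝ)..1, x^(a+1) * (1-x)^b) := by
        rw [← intervalIntegral.integral_const_mul, ← intervalIntegral.integral_neg]
        congr 1; funext x
        have h3 : (a:ℝ)+1 ≠ 0 := by positivity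
        field_simp
      rw [show (∫ x in (0:ℝ)..1, -(((b:ℝ)+1) * (1-x)^b) * (x^(a+1)/((a:ℝ)+1)))
          = ∫ x in (0:ℝ)..1, -((b:ℝ)+1) * ((1-x)^b) * (x^(a+1)/((a:ℝ)+1)) from by
        congr 1; funext x; ring]
      rw [hz]
      norm_num
    rw [h2, ih (a+1)]
    have e1 : a + 1 + b + 1 = a + (b+1) + 1 := by omega
    rw [e1]
    rw [Nat.factorial_succ (a+(b+1)), Nat.factorial_succ a, Nat.factorial_succ b]
    push_cast
    have h3 : ((a:ℝ)+1) ≠ 0 := by positivity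
    have h4 : ((a:ℝ)+(b:ℝ)+1+1) ≠ 0 := by positivity
    have h5 : ((a+(b+1)).factorial : ℝ) ≠ 0 := by positivity
    field_simp

noncomputable def Pj (α m : ℕ) : Polynomial ℝ :=
  ∑ l ∈ Finset.range (m+1),
    C ((((m+α).choose (m-l)) * (m.choose l) : ℕ) : ℝ) * ((X - C 1)^l * X^(m-l))

lemma fact_ratio (s : ℕ) : ∀ r : ℕ, (((s+r).factorial : ℝ))
    = s.factorial * ∏ i ∈ Finset.range r, ((s:ℝ)+i+1) := by
  intro r
  induction r with
  | zero => simp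
  | succ r ih =>
    rw [show s + (r+1) = (s+r)+1 from by omega, Nat.factorial_succ]
    push_cast
    rw [ih, Finset.prod_range_succ]
    push_cast
    ring

lemma Pj_eval (α m : ℕ) (x : ℝ) : (Pj α m).eval x = jacobiP α 0 m (2*x-1) := by
  unfold Pj jacobiP
  rw [eval_finset_sum]
  refine Finset.sum_congr rfl fun l _ => ?_
  simp only [eval_mul, eval_pow, eval_sub, eval_C, eval_X, Nat.add_zero]
  rw [show (2*x-1-1)/2 = x - 1 from by ring, show (2*x-1+1)/2 = x from by ring]
  push_cast
  ring

lemma Pj_monic_term (m l : ℕ) (hl : l ≤ m) :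
    ((X - C (1:ℝ))^l * X^(m-l)).Monic ∧ ((X - C (1:ℝ))^l * X^(m-l)).natDegree = m := by
  have h1 : ((X - C (1:ℝ))^l).Monic := (monic_X_sub_C 1).pow l
  have h2 : ((X : Polynomial ℝ)^(m-l)).Monic := monic_X_pow _
  refine ⟨h1.mul h2, ?_⟩
  rw [h1.natDegree_mul h2, natDegree_pow, natDegree_X_sub_C, natDegree_X_pow]
  omega

lemma Pj_natDegree (α m : ℕ) : (Pj α m).natDegree ≤ m := by
  unfold Pj
  refine Polynomial.natDegree_sum_le_of_forall_le _ _ fun l hl => ?_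
  have hl' : l ≤ m := Nat.lt_succ_iff.mp (Finset.mem_range.mp hl)
  calc (C ((((m+α).choose (m-l)) * (m.choose l) : ℕ) : ℝ) * ((X - C 1)^l * X^(m-l))).natDegree
      ≤ _ + _ := natDegree_mul_le
    _ ≤ m := by
        rw [natDegree_C, (Pj_monic_term m l hl').2]
        omega

lemma Pj_coeff (α m : ℕ) : (Pj α m).coeff m = (((2*m+α).choose m : ℕ) : ℝ) := by
  unfold Pj
  rw [finset_sum_coeff]
  have h1 : ∀ l ∈ Finset.range (m+1),
      (C ((((m+α).choose (m-l)) * (m.choose l) : ℕ) : ℝ) * ((X - C 1)^l * X^(m-l))).coeff m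
        = ((((m+α).choose (m-l)) * (m.choose l) : ℕ) : ℝ) := by
    intro l hl
    have hl' : l ≤ m := Nat.lt_succ_iff.mp (Finset.mem_range.mp hl)
    obtain ⟨hm, hd⟩ := Pj_monic_term m l hl'
    have hone := hm.coeff_natDegree
    rw [hd] at hone
    rw [coeff_C_mul, hone, mul_one]
  rw [Finset.sum_congr rfl h1]
  rw [← Nat.cast_sum]
  congr 1
  have hv : (2*m+α).choose m = ((m+α)+m).choose m := by congr 1; omega
  rw [hv, Nat.add_choose_eq, Finset.Nat.sum_antidiagonal_eq_sum_range_succ_mk]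
  conv_rhs => rw [← Finset.sum_range_reflect]
  refine Finset.sum_congr rfl fun l hl => ?_
  have hl' : l ≤ m := Nat.lt_succ_iff.mp (Finset.mem_range.mp hl)
  rw [show m+1-1-l = m-l from by omega, Nat.sub_sub_self hl']

lemma moment (α m r : ℕ) (hr : r ≤ m) :
    ∫ x in (0:ℝ)..1, (Pj α m).eval x * x^r * (1-x)^α
      = if r = m then ((m+α).factorial * m.factorial : ℝ)/((2*m+α+1).factorial) else 0 := by
  have hint : ∀ l : ℕ, IntervalIntegrable
      (fun x : ℝ => ((((m+α).choose (m-l)) * (m.choose l) : ℕ) : ℝ)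
        * ((x-1)^l * x^(m-l)) * x^r * (1-x)^α) MeasureTheory.volume 0 1 :=
    fun l => Continuous.intervalIntegrable (by fun_prop) 0 1
  have step1 : ∫ x in (0:ℝ)..1, (Pj α m).eval x * x^r * (1-x)^α
      = ∑ l ∈ Finset.range (m+1), ∫ x in (0:ℝ)..1,
          ((((m+α).choose (m-l)) * (m.choose l) : ℕ) : ℝ)
            * ((x-1)^l * x^(m-l)) * x^r * (1-x)^α := by
    rw [← intervalIntegral.integral_finset_sum (fun l _ => hint l)]
    congr 1
    funext x
    unfold Pj
    rw [eval_finset_sum, Finset.sum_mul, Finset.sum_mul]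
    refine Finset.sum_congr rfl fun l _ => ?_
    simp only [eval_mul, eval_pow, eval_sub, eval_C, eval_X]
  -- evaluate each term via beta integrals
  have step2 : ∀ l, l ≤ m → (∫ x in (0:ℝ)..1,
      ((((m+α).choose (m-l)) * (m.choose l) : ℕ) : ℝ)
        * ((x-1)^l * x^(m-l)) * x^r * (1-x)^α)
      = ((((m+α).choose (m-l)) * (m.choose l) : ℕ) : ℝ) * (-1:ℝ)^l
          * ((m-l+r).factorial * (l+α).factorial : ℝ) / ((m+r+α+1).factorial) := by
    intro l hl
    have he : (fun x : ℝ => ((((m+α).choose (m-l)) * (m.choose l) : ℕ) : ℝ)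
        * ((x-1)^l * x^(m-l)) * x^r * (1-x)^α)
        = fun x : ℝ => (((((m+α).choose (m-l)) * (m.choose l) : ℕ) : ℝ) * (-1:ℝ)^l)
            * (x^(m-l+r) * (1-x)^(l+α)) := by
      funext x
      rw [show (x-1:ℝ) = -(1-x) from by ring, neg_pow, pow_add, pow_add]
      ring
    rw [he, intervalIntegral.integral_const_mul, betaNat]
    rw [show m-l+r+(l+α)+1 = m+r+α+1 from by omega]
    ring
  rw [step1, Finset.sum_congr rfl (fun l hl => step2 l (Nat.lt_succ_iff.mp (Finset.mem_range.mp hl)))]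
  -- now the combinatorial identity
  set q : Polynomial ℝ := ∏ i ∈ Finset.range r, (X - C ((m:ℝ)+i+1)) with hq
  have hqm : q.Monic := monic_prod_of_monic _ _ fun i _ => monic_X_sub_C _
  have hqd : q.natDegree = r := by
    rw [hq, natDegree_prod _ _ fun i _ => X_sub_C_ne_zero _]
    simp only [natDegree_X_sub_C]
    simp
  have hD : ((m+r+α+1).factorial : ℝ) ≠ 0 := by positivity
  have hrr : (-1:ℝ)^r * (-1)^r = 1 := by
    rw [← pow_add]
    exact Even.neg_one_pow ⟨r, by ring⟩
  have key : ∀ l, l ≤ m →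
      ((((m+α).choose (m-l)) * (m.choose l) : ℕ) : ℝ) * (-1:ℝ)^l
          * ((m-l+r).factorial * (l+α).factorial : ℝ) / ((m+r+α+1).factorial)
      = ((m+α).factorial : ℝ) / ((m+r+α+1).factorial) * (-1:ℝ)^r
          * ((-1:ℝ)^l * (m.choose l) * q.eval (l:ℝ)) := by
    intro l hl
    set P : ℝ := ∏ i ∈ Finset.range r, ((((m-l : ℕ)):ℝ)+i+1) with hP
    have key1 : (((m+α).choose (m-l) : ℕ) : ℝ) * ((m-l).factorial : ℝ) * ((l+α).factorial : ℝ)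
        = ((m+α).factorial : ℝ) := by
      have h := Nat.choose_mul_factorial_mul_factorial (show m-l ≤ m+α from by omega)
      rw [show m+α-(m-l) = l+α from by omega] at h
      exact_mod_cast h
    have key2 : (((m-l+r).factorial : ℕ) : ℝ) = ((m-l).factorial : ℝ) * P := by
      rw [hP]; exact_mod_cast fact_ratio (m-l) r
    have key3 : q.eval (l:ℝ) = (-1:ℝ)^r * P := by
      rw [hq, eval_prod]
      simp only [eval_sub, eval_X, eval_C]
      calc ∏ i ∈ Finset.range r, ((l:ℝ) - ((m:ℝ)+i+1))
          = ∏ i ∈ Finset.range r, ((-1) * ((((m-l:ℕ)):ℝ)+i+1)) := by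
            refine Finset.prod_congr rfl fun i _ => ?_
            rw [Nat.cast_sub hl]
            ring
        _ = (-1:ℝ)^r * P := by
            rw [Finset.prod_mul_distrib, Finset.prod_const, hP]
            simp
    rw [key3]
    push_cast [key2]
    push_cast at key1
    linear_combination (((m.choose l : ℝ)) * (-1:ℝ)^l * P / ((m+r+α+1).factorial)) * key1
      - (((m+α).factorial : ℝ) * (m.choose l) * (-1:ℝ)^l * P / ((m+r+α+1).factorial)) * hrr
  rw [Finset.sum_congr rfl (fun l hl => key l (Nat.lt_succ_iff.mp (Finset.mem_range.mp hl)))]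
  rw [← Finset.mul_sum]
  rw [sum_choose_eval m q (by rw [hqd]; exact hr)]
  rcases eq_or_lt_of_le hr with hrm | hrm
  · subst hrm
    rw [if_pos rfl]
    have hc1 : q.coeff r = 1 := by
      rw [← hqd]; exact hqm.coeff_natDegree
    rw [hc1]
    rw [show r+r+α+1 = 2*r+α+1 from by omega]
    linear_combination (((r+α).factorial : ℝ) * (r.factorial : ℝ)
      / ((2*r+α+1).factorial : ℝ)) * hrr
  · rw [if_neg (by omega)]
    have hc0 : q.coeff m = 0 := coeff_eq_zero_of_natDegree_lt (by rw [hqd]; exact hrm)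
    rw [hc0]
    ring

lemma norm1d (α m : ℕ) :
    ∫ x in (0:ℝ)..1, (jacobiP α 0 m (2*x-1))^2 * (1-x)^α
      = 1 / (((2*m+α+1 : ℕ)) : ℝ) := by
  have hdeg : (Pj α m).natDegree < m + 1 := Nat.lt_succ_of_le (Pj_natDegree α m)
  have hptwise : ∀ x : ℝ, (jacobiP α 0 m (2*x-1))^2 * (1-x)^α
      = ∑ r ∈ Finset.range (m+1), (Pj α m).coeff r * ((Pj α m).eval x * x^r * (1-x)^α) := by
    intro x
    rw [← Pj_eval]
    have he : ((Pj α m).eval x)^2 * (1-x)^α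
        = (∑ r ∈ Finset.range (m+1), (Pj α m).coeff r * x^r)
            * ((Pj α m).eval x * (1-x)^α) := by
      rw [← Polynomial.eval_eq_sum_range' hdeg]
      ring
    rw [he, Finset.sum_mul]
    refine Finset.sum_congr rfl fun rr _ => by ring
  have hint : ∀ r : ℕ, IntervalIntegrable
      (fun x : ℝ => (Pj α m).coeff r * ((Pj α m).eval x * x^r * (1-x)^α))
      MeasureTheory.volume 0 1 := by
    intro r
    apply Continuous.intervalIntegrable
    have hc : Continuous fun x : ℝ => (Pj α m).eval x := (Pj α m).continuous
    fun_prop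
  calc ∫ x in (0:ℝ)..1, (jacobiP α 0 m (2*x-1))^2 * (1-x)^α
      = ∫ x in (0:ℝ)..1, ∑ r ∈ Finset.range (m+1),
          (Pj α m).coeff r * ((Pj α m).eval x * x^r * (1-x)^α) := by
        congr 1; funext x; exact hptwise x
    _ = ∑ r ∈ Finset.range (m+1), ∫ x in (0:ℝ)..1,
          (Pj α m).coeff r * ((Pj α m).eval x * x^r * (1-x)^α) :=
        intervalIntegral.integral_finset_sum (fun r _ => hint r)
    _ = ∑ r ∈ Finset.range (m+1), (Pj α m).coeff r *
          (if r = m then ((m+α).factorial * m.factorial : ℝ)/((2*m+α+1).factorial) else 0) := by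
        refine Finset.sum_congr rfl fun r hr => ?_
        rw [intervalIntegral.integral_const_mul,
          moment α m r (Nat.lt_succ_iff.mp (Finset.mem_range.mp hr))]
    _ = (Pj α m).coeff m * (((m+α).factorial * m.factorial : ℝ)/((2*m+α+1).factorial)) := by
        have hite : ∀ r ∈ Finset.range (m+1), (Pj α m).coeff r *
            (if r = m then ((m+α).factorial * m.factorial : ℝ)/((2*m+α+1).factorial) else 0)
            = if r = m then (Pj α m).coeff r
                * (((m+α).factorial * m.factorial : ℝ)/((2*m+α+1).factorial)) else 0 := by
          intro r _
          rw [mul_ite, mul_zero]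
        rw [Finset.sum_congr rfl hite, Finset.sum_ite_eq' (Finset.range (m+1)) m]
        simp
    _ = 1 / (((2*m+α+1 : ℕ)) : ℝ) := by
        rw [Pj_coeff]
        have hk : ((2*m+α).choose m : ℝ) * m.factorial * ((m+α).factorial : ℝ)
            = ((2*m+α).factorial : ℝ) := by
          have h := Nat.choose_mul_factorial_mul_factorial (show m ≤ 2*m+α from by omega)
          rw [show 2*m+α-m = m+α from by omega] at h
          exact_mod_cast h
        rw [show (2*m+α+1).factorial = (2*m+α+1) * (2*m+α).factorial from Nat.factorial_succ _]
        have h1 : ((2*m+α+1 : ℕ) : ℝ) ≠ 0 := by positivity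
        have h2 : (((2*m+α).factorial : ℕ) : ℝ) ≠ 0 := by positivity
        push_cast
        push_cast at hk
        rw [mul_div_assoc', div_eq_div_iff (by positivity) (by positivity)]
        linear_combination (2*(m:ℝ)+(α:ℝ)+1) * hk

lemma jacobiP_cont (α β n : ℕ) : Continuous (jacobiP α β n) := by
  unfold jacobiP
  apply continuous_finset_sum
  intro i _
  fun_prop

lemma main_gen (a b m j : ℕ) (hab : a = 2*j + b + 1) :
    ∫ u in {p : ℝ × ℝ | 0 < p.1 ∧ 0 < p.2 ∧ p.1 + p.2 < 1},
      ((1 - u.1)^j * jacobiP a 0 m (2*u.1 - 1) * jacobiP b 0 j (2*u.2/(1-u.1) - 1))^2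
        * (1 - u.1 - u.2)^b
    = (1 / ((2*m+a+1 : ℕ) : ℝ)) * (1 / ((2*j+b+1 : ℕ) : ℝ)) := by
  set S : Set (ℝ×ℝ) := {p : ℝ × ℝ | 0 < p.1 ∧ 0 < p.2 ∧ p.1 + p.2 < 1} with hSdef
  set A : ℝ → ℝ := fun x => jacobiP a 0 m (2*x-1) with hA
  set G : ℝ → ℝ → ℝ := fun x y => ∑ k ∈ Finset.range (j+1),
      (((j+b).choose (j-k) : ℕ) : ℝ) * ((j.choose k : ℕ) : ℝ) * (x+y-1)^k * y^(j-k) with hG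
  set F : ℝ×ℝ → ℝ := fun p => (A p.1)^2 * (G p.1 p.2)^2 * (1-p.1-p.2)^b with hF
  set f : ℝ×ℝ → ℝ := fun p => ((1 - p.1)^j * jacobiP a 0 m (2*p.1 - 1)
      * jacobiP b 0 j (2*p.2/(1-p.1) - 1))^2 * (1 - p.1 - p.2)^b with hf
  have hAc : Continuous A := (jacobiP_cont a 0 m).comp (by fun_prop)
  have hGc : Continuous (fun p : ℝ×ℝ => G p.1 p.2) := by
    rw [hG]
    apply continuous_finset_sum
    intro k _
    fun_prop
  have hFc : Continuous F := by
    rw [hF]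
    fun_prop
  have L1 : ∀ x y : ℝ, x ≠ 1 → (1-x)^j * jacobiP b 0 j (2*y/(1-x)-1) = G x y := by
    intro x y hx
    have hc : (1:ℝ) - x ≠ 0 := sub_ne_zero.mpr (Ne.symm hx)
    rw [hG]
    unfold jacobiP
    rw [Finset.mul_sum]
    refine Finset.sum_congr rfl fun k hk => ?_
    have hk' : k ≤ j := Nat.lt_succ_iff.mp (Finset.mem_range.mp hk)
    have e1 : ((2*y/(1-x)-1-1)/2) * (1-x) = x+y-1 := by field_simp; ring
    have e2 : ((2*y/(1-x)-1+1)/2) * (1-x) = y := by field_simp; ring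
    have esplit : ((1:ℝ)-x)^j = (1-x)^k * (1-x)^(j-k) := by
      rw [← pow_add]
      congr 1
      omega
    rw [Nat.add_zero]
    calc (1-x)^j * ((((j+b).choose (j-k) : ℕ) : ℝ) * ((j.choose k : ℕ) : ℝ)
          * ((2*y/(1-x)-1-1)/2)^k * ((2*y/(1-x)-1+1)/2)^(j-k))
        = (((j+b).choose (j-k) : ℕ) : ℝ) * ((j.choose k : ℕ) : ℝ)
            * (((2*y/(1-x)-1-1)/2) * (1-x))^k * ((((2*y/(1-x)-1+1)/2)) * (1-x))^(j-k) := by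
          rw [mul_pow, mul_pow, esplit]
          ring
      _ = (((j+b).choose (j-k) : ℕ) : ℝ) * ((j.choose k : ℕ) : ℝ) * (x+y-1)^k * y^(j-k) := by
          rw [e1, e2]
  have hfF : S.indicator f = S.indicator F := by
    funext p
    rcases Classical.em (p ∈ S) with hp | hp
    · rw [Set.indicator_of_mem hp, Set.indicator_of_mem hp]
      obtain ⟨h1, h2, h3⟩ := hp
      have hx1 : p.1 ≠ 1 := by
        intro h
        rw [h] at h3
        linarith
      rw [hf, hF]
      dsimp only
      rw [← L1 p.1 p.2 hx1, hA]
      ring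
    · rw [Set.indicator_of_notMem hp, Set.indicator_of_notMem hp]
  have hS : MeasurableSet S := by
    apply IsOpen.measurableSet
    have h1 : IsOpen {p : ℝ×ℝ | 0 < p.1} := isOpen_lt continuous_const continuous_fst
    have h2 : IsOpen {p : ℝ×ℝ | 0 < p.2} := isOpen_lt continuous_const continuous_snd
    have h3 : IsOpen {p : ℝ×ℝ | p.1 + p.2 < 1} :=
      isOpen_lt (continuous_fst.add continuous_snd) continuous_const
    exact h1.inter (h2.inter h3)
  have hsub : S ⊆ Set.Icc ((0:ℝ),(0:ℝ)) (1,1) := by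
    rintro ⟨x, y⟩ ⟨h1, h2, h3⟩
    dsimp only at h1 h2 h3
    rw [Set.mem_Icc]
    constructor
    · exact ⟨le_of_lt h1, le_of_lt h2⟩
    · exact ⟨by dsimp; linarith, by dsimp; linarith⟩
  have hFi : Integrable (S.indicator F) := by
    rw [integrable_indicator_iff hS]
    exact ((hFc.continuousOn).integrableOn_compact isCompact_Icc).mono_set hsub
  have step0 : ∫ u in S, f u = ∫ x : ℝ, ∫ y : ℝ, S.indicator F (x, y) := by
    rw [← integral_indicator hS, hfF]
    rw [MeasureTheory.Measure.volume_eq_prod] at hFi ⊢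
    exact MeasureTheory.integral_prod _ hFi
  have hkey : ∀ c : ℝ, 0 < c →
      ∫ y in (0:ℝ)..c, (jacobiP b 0 j (2*y/c-1))^2 * (c-y)^b
        = c^(b+1) * (1 / ((2*j+b+1 : ℕ) : ℝ)) := by
    intro c hc0
    have hcne : c ≠ 0 := ne_of_gt hc0
    have h1 := intervalIntegral.smul_integral_comp_mul_left
      (a := (0:ℝ)) (b := (1:ℝ))
      (f := fun y => (jacobiP b 0 j (2*y/c-1))^2 * (c-y)^b) c
    rw [mul_zero, mul_one] at h1
    rw [← h1]
    have h2 : ∀ t : ℝ, (jacobiP b 0 j (2*(c*t)/c-1))^2 * (c-c*t)^b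
        = c^b * ((jacobiP b 0 j (2*t-1))^2 * (1-t)^b) := by
      intro t
      rw [show 2*(c*t)/c = 2*t from by field_simp,
        show c - c*t = c * (1-t) from by ring, mul_pow]
      ring
    rw [show (fun t : ℝ => (jacobiP b 0 j (2*(c*t)/c-1))^2 * (c-c*t)^b)
        = fun t : ℝ => c^b * ((jacobiP b 0 j (2*t-1))^2 * (1-t)^b) from funext h2]
    rw [intervalIntegral.integral_const_mul, norm1d b j]
    rw [smul_eq_mul]
    ring
  have inner : ∀ x : ℝ, (∫ y : ℝ, S.indicator F (x, y))
      = (Set.Ioo (0:ℝ) 1).indicator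
          (fun x => (A x)^2 * (1-x)^a * (1 / ((2*j+b+1 : ℕ) : ℝ))) x := by
    intro x
    have hsect : ∀ y : ℝ, S.indicator F (x, y)
        = ({y : ℝ | (x, y) ∈ S}).indicator (fun y => F (x, y)) y := by
      intro y
      rcases Classical.em ((x, y) ∈ S) with hp | hp
      · rw [Set.indicator_of_mem hp, Set.indicator_of_mem (by exact hp)]
      · rw [Set.indicator_of_notMem hp, Set.indicator_of_notMem (by exact hp)]
    rcases Classical.em (x ∈ Set.Ioo (0:ℝ) 1) with hx | hx
    · obtain ⟨hx0, hx1⟩ := hx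
      have hsec : {y : ℝ | (x, y) ∈ S} = Set.Ioo 0 (1-x) := by
        ext y
        simp only [hSdef, Set.mem_setOf_eq, Set.mem_Ioo]
        constructor
        · rintro ⟨_, h2, h3⟩
          exact ⟨h2, by linarith⟩
        · rintro ⟨h2, h3⟩
          exact ⟨hx0, h2, by linarith⟩
      rw [Set.indicator_of_mem (Set.mem_Ioo.mpr ⟨hx0, hx1⟩)]
      simp_rw [hsect, hsec]
      rw [integral_indicator measurableSet_Ioo]
      have hxne : x ≠ 1 := ne_of_lt hx1
      have hFform : ∀ y : ℝ, F (x, y)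
          = ((A x)^2 * (1-x)^(2*j)) *
              ((jacobiP b 0 j (2*y/(1-x)-1))^2 * (1-x-y)^b) := by
        intro y
        rw [hF]
        dsimp only
        rw [← L1 x y hxne]
        ring
      rw [MeasureTheory.setIntegral_congr_fun measurableSet_Ioo
        (fun y _ => hFform y)]
      rw [MeasureTheory.integral_const_mul]
      rw [← MeasureTheory.integral_Ioc_eq_integral_Ioo,
        ← intervalIntegral.integral_of_le (by linarith : (0:ℝ) ≤ 1 - x)]
      rw [hkey (1-x) (by linarith)]
      rw [show a = 2*j+(b+1) from by omega, pow_add]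
      ring
    · rw [Set.indicator_of_notMem hx]
      have hsec : {y : ℝ | (x, y) ∈ S} = ∅ := by
        ext y
        simp only [hSdef, Set.mem_setOf_eq, Set.mem_empty_iff_false, iff_false]
        rintro ⟨h1, h2, h3⟩
        simp only [Set.mem_Ioo, not_and_or, not_lt] at hx
        rcases hx with h | h
        · exact absurd h1 (not_lt.mpr h)
        · linarith
      simp_rw [hsect, hsec]
      simp
  rw [step0]
  rw [show (fun x : ℝ => ∫ y : ℝ, S.indicator F (x, y))
      = fun x : ℝ => (Set.Ioo (0:ℝ) 1).indicator
          (fun x => (A x)^2 * (1-x)^a * (1 / ((2*j+b+1 : ℕ) : ℝ))) x from funext inner]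
  rw [integral_indicator measurableSet_Ioo]
  rw [show (fun x : ℝ => (A x)^2 * (1-x)^a * (1 / ((2*j+b+1 : ℕ) : ℝ)))
      = fun x : ℝ => ((jacobiP a 0 m (2*x-1))^2 * (1-x)^a) * (1 / ((2*j+b+1 : ℕ) : ℝ))
      from by funext x; rw [hA]] 
  rw [MeasureTheory.integral_mul_const]
  rw [← MeasureTheory.integral_Ioc_eq_integral_Ioo,
    ← intervalIntegral.integral_of_le (by norm_num : (0:ℝ) ≤ 1)]
  rw [norm1d a m]


theorem stmt_15 (N : ℕ) (hN : 3 ≤ N) (n j : ℕ) (hj : j ≤ n) :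
    ∫ u in {p : ℝ × ℝ | 0 < p.1 ∧ 0 < p.2 ∧ p.1 + p.2 < 1},
        ((1 - u.1) ^ j * jacobiP (N - 2 + 2 * j) 0 (n - j) (2 * u.1 - 1) *
            jacobiP (N - 3) 0 j (2 * u.2 / (1 - u.1) - 1)) ^ 2 *
          (1 - u.1 - u.2) ^ (N - 3) =
      1 / ((2 * (n : ℝ) + N - 1) * (2 * (j : ℝ) + N - 2)) := by
  rw [main_gen (N - 2 + 2 * j) (N - 3) (n - j) j (by omega)]
  rw [show 2*(n-j)+(N - 2 + 2*j)+1 = 2*n+N-1 from by omega,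
    show 2*j+(N-3)+1 = 2*j+N-2 from by omega]
  have c1 : ((2*n+N-1 : ℕ) : ℝ) = 2*(n:ℝ)+N-1 := by
    rw [Nat.cast_sub (by omega : 1 ≤ 2*n+N)]
    push_cast
    ring
  have c2 : ((2*j+N-2 : ℕ) : ℝ) = 2*(j:ℝ)+N-2 := by
    rw [Nat.cast_sub (by omega : 2 ≤ 2*j+N)]
    push_cast
    ring
  rw [c1, c2, div_mul_div_comm, one_mul]
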